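/- Let e be an idempotent of kN such that the left module kN·e, together with the map induced by the augmentation, is a projective cover of the trivial kN-module k. Then for every natural number n there are isomorphisms of left kN-modules Jⁿ/(Jⁿ·A) ≅ (Jⁿ·e)/(Jⁿ⁺¹·e), where Jⁿ·A denotes the k-span of products x·a with x ∈ Jⁿ and a ∈ A. -/

import Mathlib

/-!
STATEMENT 10.  `k` a field, `N` a finite group, `J` the Jacobson radical of `kN` and `A`
the augmentation ideal of `kN`.  If `e` is an idempotent of `kN` such that the left module
`kN·e`, with the map induced by the augmentation, is a projective cover of the trivial
`kN`-module `k`, then for every `n` there are isomorphisms of left `kN`-modules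
`Jⁿ/(Jⁿ·A) ≅ (Jⁿ·e)/(Jⁿ⁺¹·e)`, where `Jⁿ·A` is the span of the products `x·a`,
`x ∈ Jⁿ`, `a ∈ A` (this span is the same whether taken over `k` or over `kN`, since `Jⁿ`
is a left ideal; we use the `kN`-span so that all objects are left `kN`-modules).
-/

noncomputable section

variable (k : Type) [Field k] (N : Type) [Group N] [Fintype N]

/-- The Jacobson radical `J` of `kN`, as a `k`-submodule of `kN`. -/
def Jrad : Submodule k (MonoidAlgebra k N) :=
  ((⊥ : Ideal (MonoidAlgebra k N)).jacobson).restrictScalars k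

/-- The augmentation map `kN →ₐ[k] k`, sending each group element to `1`. -/
def aug : MonoidAlgebra k N →ₐ[k] k :=
  MonoidAlgebra.lift k k N 1

/-- The augmentation ideal `A` of `kN`. -/
def augIdeal : Ideal (MonoidAlgebra k N) :=
  RingHom.ker (aug k N).toRingHom

/-- The trivial `kN`-module `k`. -/
def Triv : Type := k

instance : AddCommGroup (Triv k) := inferInstanceAs (AddCommGroup k)

instance : Module (MonoidAlgebra k N) (Triv k) :=
  Module.compHom k (aug k N).toRingHom

/-- `Jⁿ`, as a left ideal of `kN` (as a set it is the `n`-th power of `J`). -/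
def Jpow (n : ℕ) : Ideal (MonoidAlgebra k N) :=
  Submodule.span (MonoidAlgebra k N) ((Jrad k N ^ n : Submodule k (MonoidAlgebra k N)) :
    Set (MonoidAlgebra k N))

/-- `Jⁿ·A`, the span of the products `x * a`, `x ∈ Jⁿ`, `a ∈ A`. -/
def JpowA (n : ℕ) : Ideal (MonoidAlgebra k N) :=
  Submodule.span (MonoidAlgebra k N)
    {y | ∃ x ∈ (Jrad k N ^ n : Submodule k (MonoidAlgebra k N)),
      ∃ a ∈ augIdeal k N, y = x * a}

/-- `Jⁿ·e`, the span of the products `x * e`, `x ∈ Jⁿ`. -/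
def JpowE (e : MonoidAlgebra k N) (n : ℕ) : Ideal (MonoidAlgebra k N) :=
  Submodule.span (MonoidAlgebra k N)
    {y | ∃ x ∈ (Jrad k N ^ n : Submodule k (MonoidAlgebra k N)), y = x * e}

lemma aug_jacobson {j : MonoidAlgebra k N}
    (hj : j ∈ ((⊥ : Ideal (MonoidAlgebra k N)).jacobson)) : aug k N j = 0 := by
  have hs : Function.Surjective (aug k N).toRingHom := fun c =>
    ⟨algebraMap k (MonoidAlgebra k N) c, (aug k N).commutes c⟩
  have hmax : (augIdeal k N).IsMaximal := RingHom.ker_isMaximal_of_surjective _ hs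
  have hle : ((⊥ : Ideal (MonoidAlgebra k N)).jacobson) ≤ augIdeal k N :=
    sInf_le ⟨bot_le, hmax⟩
  have := hle hj
  simpa [augIdeal, RingHom.mem_ker] using this

theorem stmt10 (e : MonoidAlgebra k N) (he : IsIdempotentElem e)
    (π : ↥(Ideal.span {e}) →ₗ[MonoidAlgebra k N] Triv k)
    (hπ : ∀ x : ↥(Ideal.span {e}), π x = aug k N (x : MonoidAlgebra k N))
    (hproj : Module.Projective (MonoidAlgebra k N) ↥(Ideal.span {e}))
    (hsurj : Function.Surjective π)
    (hsup : ∀ p : Submodule (MonoidAlgebra k N) ↥(Ideal.span {e}),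
      p ⊔ LinearMap.ker π = ⊤ → p = ⊤) :
    ∀ n : ℕ,
      Nonempty
        ((↥(Jpow k N n) ⧸
            Submodule.comap (Jpow k N n).subtype (JpowA k N n)) ≃ₗ[MonoidAlgebra k N]
          (↥(JpowE k N e n) ⧸
            Submodule.comap (JpowE k N e n).subtype (JpowE k N e (n + 1)))) := by
  classical
  -- aug e = 1
  have hauge : aug k N e = 1 := by
    obtain ⟨y, hy⟩ := hsurj (show Triv k from (1 : k))
    have h1 : aug k N (y : MonoidAlgebra k N) = 1 := (hπ y).symm.trans hy
    obtain ⟨c, hc⟩ := Submodule.mem_span_singleton.1 y.2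
    have hne : aug k N e ≠ 0 := by
      intro h0
      rw [← hc, smul_eq_mul, map_mul, h0, mul_zero] at h1
      exact one_ne_zero h1.symm
    have h2 : aug k N e * aug k N e = aug k N e := by
      rw [← map_mul, he]
    exact mul_left_cancel₀ hne (h2.trans (mul_one (aug k N e)).symm)
  -- elements of span{e} killed by aug lie in the Jacobson radical
  have star : ∀ x ∈ Ideal.span {e}, aug k N x = 0 →
      x ∈ ((⊥ : Ideal (MonoidAlgebra k N)).jacobson) := by
    intro x hxM hx0
    have hker : (⟨x, hxM⟩ : ↥(Ideal.span {e})) ∈ LinearMap.ker π := by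
      rw [LinearMap.mem_ker, hπ]
      exact hx0
    show x ∈ sInf {J : Ideal (MonoidAlgebra k N) | ⊥ ≤ J ∧ J.IsMaximal}
    refine Submodule.mem_sInf.2 ?_
    rintro L ⟨-, hLmax⟩
    by_cases hML : Ideal.span {e} ≤ L
    · exact hML hxM
    · set p := Submodule.comap (Ideal.span {e}).subtype L with hp
      have hcoatom : IsCoatom p := by
        constructor
        · intro htop
          exact hML fun m hm => by
            have : (⟨m, hm⟩ : ↥(Ideal.span {e})) ∈ p := htop ▸ Submodule.mem_top
            exact this
        · intro q hq
          have hq'L : ¬ Submodule.map (Ideal.span {e}).subtype q ≤ L := by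
            intro hle
            refine absurd ?_ (not_le_of_gt hq)
            intro z hz
            exact Submodule.mem_comap.2 (hle ⟨z, hz, rfl⟩)
          have htop : L ⊔ Submodule.map (Ideal.span {e}).subtype q = ⊤ :=
            hLmax.out.2 _ (left_lt_sup.2 hq'L)
          rw [eq_top_iff]
          rintro ⟨m, hm⟩ -
          have hmem : m ∈ L ⊔ Submodule.map (Ideal.span {e}).subtype q :=
            htop ▸ Submodule.mem_top
          obtain ⟨l, hl, z, hz, hsum⟩ := Submodule.mem_sup.1 hmem
          obtain ⟨w, hw, rfl⟩ := hz
          have hlM : l ∈ Ideal.span {e} := by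
            have hl' : l = m - ((Ideal.span {e}).subtype w) := eq_sub_of_add_eq hsum
            rw [hl']
            exact Submodule.sub_mem _ hm w.2
          have hlp : (⟨l, hlM⟩ : ↥(Ideal.span {e})) ∈ q := hq.le (Submodule.mem_comap.2 hl)
          have hEq : (⟨m, hm⟩ : ↥(Ideal.span {e})) = ⟨l, hlM⟩ + w := by
            apply Subtype.ext
            exact hsum.symm
          rw [hEq]
          exact add_mem hlp hw
      have hKp : LinearMap.ker π ≤ p := by
        by_contra hnot
        exact hcoatom.1 (hsup _ (hcoatom.2 _ (left_lt_sup.2 hnot)))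
      exact hKp hker
  have hmemA : ∀ a : MonoidAlgebra k N, a ∈ augIdeal k N ↔ aug k N a = 0 := by
    intro a
    simp [augIdeal, RingHom.mem_ker]
  -- A·e ⊆ J
  have hae : ∀ a ∈ augIdeal k N, a * e ∈ Jrad k N := by
    intro a ha
    have hmem : a * e ∈ Ideal.span {e} := by
      have := Submodule.smul_mem (Ideal.span {e}) a (Submodule.mem_span_singleton_self e)
      simpa using this
    have haug : aug k N (a * e) = 0 := by
      rw [map_mul, (hmemA a).1 ha, zero_mul]
    exact star _ hmem haug
  -- J·e ⊆ A
  have hJA : ∀ j ∈ Jrad k N, j * e ∈ augIdeal k N := by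
    intro j hj
    rw [hmemA]
    rw [map_mul, aug_jacobson k N hj, zero_mul]
  have h1e : (1 : MonoidAlgebra k N) - e ∈ augIdeal k N := by
    rw [hmemA]
    rw [map_sub, map_one, hauge, sub_self]
  intro n
  let R := MonoidAlgebra k N
  let ρ : R →ₗ[R] R := LinearMap.toSpanSingleton R R e
  -- (a)
  have ha : Jpow k N n ≤ Submodule.comap ρ (JpowE k N e n) := by
    refine Submodule.span_le.2 ?_
    intro x hx
    refine Submodule.mem_comap.2 (Submodule.subset_span ⟨x, hx, ?_⟩)
    simp [ρ, LinearMap.toSpanSingleton_apply]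
    rfl
  -- (b)
  have hb : JpowA k N n ≤ Submodule.comap ρ (JpowE k N e (n + 1)) := by
    refine Submodule.span_le.2 ?_
    rintro y ⟨x, hx, a, haA, rfl⟩
    have h1 : x * (a * e) ∈ (Jrad k N ^ (n + 1) : Submodule k R) := by
      rw [pow_succ]
      exact Submodule.mul_mem_mul hx (hae a haA)
    refine Submodule.mem_comap.2 (Submodule.subset_span ⟨x * (a * e), h1, ?_⟩)
    show x * a * e = x * (a * e) * e
    rw [mul_assoc, mul_assoc, mul_assoc, he.eq]
  -- (d1)
  have hd1 : Jpow k N n ≤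
      Submodule.comap (LinearMap.toSpanSingleton R R (1 - e)) (JpowA k N n) := by
    refine Submodule.span_le.2 ?_
    intro x hx
    refine Submodule.mem_comap.2 (Submodule.subset_span ⟨x, hx, 1 - e, h1e, ?_⟩)
    rfl
  -- (d2)
  have hd2 : JpowE k N e (n + 1) ≤ JpowA k N n := by
    refine Submodule.span_le.2 ?_
    rintro y ⟨z, hz, rfl⟩
    rw [pow_succ] at hz
    refine Submodule.mul_induction_on (C := fun z => z * e ∈ JpowA k N n) hz ?_ ?_
    · intro m hm j hj
      exact Submodule.subset_span ⟨m, hm, j * e, hJA j hj, (mul_assoc m j e)⟩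
    · intro a b hpa hpb
      rw [add_mul]
      exact add_mem hpa hpb
  -- surjectivity generator fact
  have hsurj' : JpowE k N e n ≤ Submodule.map ρ (Jpow k N n) := by
    refine Submodule.span_le.2 ?_
    rintro y ⟨x, hx, rfl⟩
    refine ⟨x, Submodule.subset_span hx, ?_⟩
    simp [ρ, LinearMap.toSpanSingleton_apply]
  let g : ↥(Jpow k N n) →ₗ[R] ↥(JpowE k N e n) :=
    LinearMap.codRestrict _ (ρ.comp (Jpow k N n).subtype) (fun c => ha c.2)
  let f := (Submodule.mkQ
      (Submodule.comap (JpowE k N e n).subtype (JpowE k N e (n + 1)))).comp g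
  have hker : LinearMap.ker f = Submodule.comap (Jpow k N n).subtype (JpowA k N n) := by
    ext x
    simp only [LinearMap.mem_ker, LinearMap.comp_apply, Submodule.mkQ_apply,
      Submodule.Quotient.mk_eq_zero, Submodule.mem_comap, f, g,
      LinearMap.codRestrict_apply, Submodule.coe_subtype,
      LinearMap.toSpanSingleton_apply, smul_eq_mul, ρ]
    constructor
    · intro h
      have h2 : (x : R) * (1 - e) ∈ JpowA k N n := hd1 x.2
      have h3 : (x : R) = (x : R) * e + (x : R) * (1 - e) := by noncomm_ring
      rw [h3]
      exact add_mem (hd2 h) h2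
    · intro h
      exact hb h
  have hfs : Function.Surjective f := by
    have hgs : Function.Surjective g := by
      intro y
      obtain ⟨x, hx, hxe⟩ := hsurj' y.2
      exact ⟨⟨x, hx⟩, Subtype.ext hxe⟩
    exact (Submodule.mkQ_surjective _).comp hgs
  exact ⟨(Submodule.quotEquivOfEq _ _ hker.symm).trans (f.quotKerEquivOfSurjective hfs)⟩

end
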